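/- Let p ≥ 1, let Ω ⊆ ℝ^d be a bounded open set, and let (Ω_k)_k be a countable family of pairwise disjoint open subsets of Ω. Then for all finite positive Borel measures μ, ν on the closure of Ω: Wb_{Ω,p}^p(μ, ν) ≥ Σ_k Wb_{Ω_k,p}^p(μ, ν). -/

import Mathlib

open MeasureTheory ProbabilityTheory Filter
open scoped ENNReal NNReal

noncomputable section

/-- The Wasserstein cost of order `p` (i.e. the `p`-th power of the `p`-Wasserstein
distance): the infimum over couplings `π` of `μ` and `ν` of `∫ edist(x,y)^p dπ`. -/
def wCost {E : Type*} [MeasurableSpace E] [PseudoEMetricSpace E]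
    (p : ℝ) (μ ν : Measure E) : ℝ≥0∞ :=
  ⨅ π ∈ {π : Measure (E × E) | π.map Prod.fst = μ ∧ π.map Prod.snd = ν},
    ∫⁻ z, edist z.1 z.2 ^ p ∂π

/-- The boundary Wasserstein cost of order `p` on a set `A`: the infimum of
`∫ edist(x,y)^p dπ` over positive measures `π` concentrated on `cl A × cl A`
whose marginals restricted to `A` coincide with `μ` and `ν` restricted to `A`. -/
def bCost {E : Type*} [MeasurableSpace E] [PseudoEMetricSpace E]
    (p : ℝ) (A : Set E) (μ ν : Measure E) : ℝ≥0∞ :=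
  ⨅ π ∈ {π : Measure (E × E) |
      π ((closure A ×ˢ closure A)ᶜ) = 0 ∧
      (π.map Prod.fst).restrict A = μ.restrict A ∧
      (π.map Prod.snd).restrict A = ν.restrict A},
    ∫⁻ z, edist z.1 z.2 ^ p ∂π

/-- The empirical measure `(1/n) ∑_{i<n} δ_{x i}`. -/
def empMeasure {E : Type*} [MeasurableSpace E] (n : ℕ) (x : ℕ → E) : Measure E :=
  (n : ℝ≥0∞)⁻¹ • ∑ i ∈ Finset.range n, Measure.dirac (x i)

/-- A set `Ω ⊆ ℝ^d` has Lipschitz boundary: near every boundary point, for a suitable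
unit direction `e`, `Ω` coincides with the open region strictly above the graph of a
Lipschitz function defined on the hyperplane `e^⊥`. -/
def HasLipschitzBoundary {d : ℕ} (Ω : Set (EuclideanSpace ℝ (Fin d))) : Prop :=
  ∀ x ∈ frontier Ω, ∃ e : EuclideanSpace ℝ (Fin d), ‖e‖ = 1 ∧
    ∃ r : ℝ, 0 < r ∧ ∃ L : ℝ≥0, ∃ φ : EuclideanSpace ℝ (Fin d) → ℝ,
      LipschitzWith L φ ∧
      Ω ∩ Metric.ball x r =
        {y ∈ Metric.ball x r | φ (y - (inner ℝ y e : ℝ) • e) < (inner ℝ y e : ℝ)}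

/-- `X` is an i.i.d. sequence of random variables with common law `μ` under `P`. -/
def IsIIDSeq {Ωs E : Type*} [MeasurableSpace Ωs] [MeasurableSpace E]
    (P : Measure Ωs) (X : ℕ → Ωs → E) (μ : Measure E) : Prop :=
  (∀ i, Measurable (X i)) ∧ (∀ i, P.map (X i) = μ) ∧
    iIndepFun (m := fun _ : ℕ => ‹MeasurableSpace E›) X P

/-- `X` and `Y` are jointly i.i.d. sequences with common law `μ` under `P`. -/
def IsIIDPair {Ωs E : Type*} [MeasurableSpace Ωs] [MeasurableSpace E]
    (P : Measure Ωs) (X Y : ℕ → Ωs → E) (μ : Measure E) : Prop :=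
  (∀ i, Measurable (X i)) ∧ (∀ i, Measurable (Y i)) ∧
  (∀ i, P.map (X i) = μ) ∧ (∀ i, P.map (Y i) = μ) ∧
    iIndepFun (m := fun _ : ℕ ⊕ ℕ => ‹MeasurableSpace E›) (Sum.elim X Y) P

/-- `ρ` is a Hölder continuous probability density on `Ω`, uniformly strictly positive
and bounded from above. -/
def IsGoodDensity {d : ℕ} (Ω : Set (EuclideanSpace ℝ (Fin d)))
    (ρ : EuclideanSpace ℝ (Fin d) → ℝ) : Prop :=
  Measurable ρ ∧
  (∃ α ∈ Set.Ioc (0:ℝ) 1, ∃ C : ℝ, ∀ x ∈ Ω, ∀ y ∈ Ω, |ρ x - ρ y| ≤ C * dist x y ^ α) ∧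
  (∃ a > (0:ℝ), ∀ x ∈ Ω, a ≤ ρ x) ∧ (∃ b : ℝ, ∀ x ∈ Ω, ρ x ≤ b) ∧
  ∫ x in Ω, ρ x = 1

end

section AuxLemmas

open Set EMetric Metric TopologicalSpace

lemma IsPreconnected.frontier_inter' {α : Type*} [TopologicalSpace α] {t s : Set α}
    (ht : IsPreconnected t)
    (h1 : (t ∩ s).Nonempty) (h2 : (t ∩ sᶜ).Nonempty) : (t ∩ frontier s).Nonempty := by
  by_contra h
  rw [Set.not_nonempty_iff_eq_empty] at h
  have hfr : ∀ z ∈ t, z ∉ frontier s := fun z hz hzf =>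
    (Set.eq_empty_iff_forall_notMem.mp h z) ⟨hz, hzf⟩
  have hsubu : t ⊆ interior s ∪ (closure s)ᶜ := by
    intro z hz
    by_cases hzc : z ∈ closure s
    · left
      by_contra hz2
      exact hfr z hz ⟨hzc, hz2⟩
    · exact Or.inr hzc
  have h1' : (t ∩ interior s).Nonempty := by
    obtain ⟨a, hat, has⟩ := h1
    refine ⟨a, hat, ?_⟩
    by_contra ha2
    exact hfr a hat ⟨subset_closure has, ha2⟩
  have h2' : (t ∩ (closure s)ᶜ).Nonempty := by
    obtain ⟨b, hbt, hbs⟩ := h2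
    refine ⟨b, hbt, ?_⟩
    intro hbc
    exact hfr b hbt ⟨hbc, fun hbi => hbs (interior_subset hbi)⟩
  obtain ⟨w, _, hw1, hw2⟩ := ht (interior s) (closure s)ᶜ isOpen_interior
    isClosed_closure.isOpen_compl hsubu h1' h2'
  exact hw2 (subset_closure (interior_subset hw1))

variable {E : Type*} [NormedAddCommGroup E] [NormedSpace ℝ E]

lemma exists_frontier_exit {s : Set E} {x y : E} (hx : x ∈ s) (hy : y ∉ s) :
    ∃ w ∈ frontier s, edist x w + edist w y = edist x y := by
  obtain ⟨w, hwseg, hwf⟩ := (convex_segment x y).isPreconnected.frontier_inter'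
    ⟨x, left_mem_segment ℝ x y, hx⟩ ⟨y, right_mem_segment ℝ x y, hy⟩
  refine ⟨w, hwf, ?_⟩
  have h := dist_add_dist_of_mem_segment hwseg
  rw [edist_dist, edist_dist, edist_dist, ← ENNReal.ofReal_add dist_nonneg dist_nonneg, h]

lemma infEdist_frontier_le {s : Set E} {x y : E} (hx : x ∈ s) (hy : y ∉ s) :
    infEdist x (frontier s) ≤ edist x y := by
  obtain ⟨w, hwf, hsum⟩ := exists_frontier_exit hx hy
  calc infEdist x (frontier s) ≤ edist x w := infEdist_le_edist_of_mem hwf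
  _ ≤ edist x w + edist w y := le_self_add
  _ = edist x y := hsum

lemma cross_infEdist_le {s t : Set E} (hs : IsOpen s) (ht : IsOpen t) (hst : Disjoint s t)
    {x y : E} (hx : x ∈ s) (hy : y ∈ t) :
    infEdist x sᶜ + infEdist y tᶜ ≤ edist x y := by
  have hy' : y ∉ s := Set.disjoint_right.mp hst hy
  obtain ⟨w, hwf, hsum⟩ := exists_frontier_exit hx hy'
  have hw1 : w ∉ s := by
    rw [hs.frontier_eq] at hwf
    exact hwf.2
  have hw2 : w ∉ t := by
    have hcl : w ∈ closure s := frontier_subset_closure hwf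
    have hd : Disjoint (closure s) t := hst.closure_left ht
    exact Set.disjoint_left.mp hd hcl
  calc infEdist x sᶜ + infEdist y tᶜ ≤ edist x w + edist y w :=
        add_le_add (infEdist_le_edist_of_mem hw1) (infEdist_le_edist_of_mem hw2)
  _ = edist x w + edist w y := by rw [edist_comm y w]
  _ = edist x y := hsum

lemma exists_rpow_approx {p : ℝ} (hp : 1 ≤ p) {a η : ℝ≥0∞} (ha : a ≠ ∞) (hη : η ≠ 0) :
    ∃ b : ℝ≥0∞, a < b ∧ b ^ p ≤ a ^ p + η := by
  have hp0 : 0 < p := lt_of_lt_of_le one_pos hp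
  have hcancel : ∀ c : ℝ≥0∞, (c ^ p⁻¹) ^ p = c := by
    intro c
    rw [← ENNReal.rpow_mul, inv_mul_cancel₀ hp0.ne', ENNReal.rpow_one]
  rcases eq_or_ne a 0 with rfl | ha0
  · refine ⟨(min η 1) ^ p⁻¹, ?_, ?_⟩
    · exact ENNReal.rpow_pos (lt_min (pos_iff_ne_zero.mpr hη) one_pos)
        ((min_le_right _ _).trans_lt (by norm_num)).ne
    · rw [hcancel, ENNReal.zero_rpow_of_pos hp0, zero_add]
      exact min_le_left _ _
  · have hap0 : a ^ p ≠ 0 := (ENNReal.rpow_pos (pos_iff_ne_zero.mpr ha0) ha).ne'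
    have haptop : a ^ p ≠ ∞ := ENNReal.rpow_ne_top_of_nonneg hp0.le ha
    have hc0 : min η (a ^ p) ≠ 0 :=
      (lt_min (pos_iff_ne_zero.mpr hη) (pos_iff_ne_zero.mpr hap0)).ne'
    refine ⟨(a ^ p + min η (a ^ p)) ^ p⁻¹, ?_, ?_⟩
    · by_contra hba
      push_neg at hba
      have h2 := ENNReal.rpow_le_rpow hba hp0.le
      rw [hcancel] at h2
      have h3 : a ^ p + min η (a ^ p) ≤ a ^ p + 0 := by rwa [add_zero]
      rw [ENNReal.add_le_add_iff_left haptop] at h3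
      exact hc0 (le_zero_iff.mp h3)
    · rw [hcancel]
      exact add_le_add le_rfl (min_le_left _ _)

lemma exists_gfun [MeasurableSpace E] [BorelSpace E] [SecondCountableTopology E]
    {s : Set E} (hsm : MeasurableSet s) {p : ℝ} (hp : 1 ≤ p) {η : ℝ≥0∞} (hη : η ≠ 0) :
    ∃ g : E → E, Measurable g ∧ ∀ x ∈ s, sᶜ.Nonempty →
      g x ∈ frontier s ∧ edist x (g x) ^ p ≤ infEdist x sᶜ ^ p + η := by
  classical
  have hp0 : 0 < p := lt_of_lt_of_le one_pos hp
  rcases Set.eq_empty_or_nonempty sᶜ with hce | hcne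
  · exact ⟨id, measurable_id, fun x hx hn => absurd hce hn.ne_empty⟩
  rcases Set.eq_empty_or_nonempty s with rfl | hne
  · exact ⟨id, measurable_id, by simp⟩
  obtain ⟨w0, hw0, -⟩ := exists_frontier_exit hne.some_mem hcne.some_mem
  obtain ⟨t, hts, htc, htd⟩ :=
    (IsSeparable.of_separableSpace (frontier s)).exists_countable_dense_subset
  have htne : t.Nonempty := by
    rcases Set.eq_empty_or_nonempty t with rfl | h
    · simp only [closure_empty] at htd
      exact absurd (htd hw0) (Set.notMem_empty _)
    · exact h
  obtain ⟨f, hf⟩ := Set.Countable.exists_eq_range htc htne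
  set P : E → ℕ → Prop := fun x n =>
    x ∉ s ∨ edist x (f n) ^ p ≤ infEdist x sᶜ ^ p + η with hP
  have hex : ∀ x, ∃ n, P x n := by
    intro x
    by_cases hx : x ∈ s
    · have ha : infEdist x sᶜ ≠ ∞ :=
        ne_top_of_le_ne_top (edist_ne_top x hcne.some)
          (infEdist_le_edist_of_mem hcne.some_mem)
      obtain ⟨b, hab, hbp⟩ := exists_rpow_approx hp ha hη
      have h1 : infEdist x (Set.range f) ≤ infEdist x sᶜ := by
        rw [← hf]
        calc infEdist x t = infEdist x (closure t) := (infEdist_closure).symm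
          _ ≤ infEdist x (frontier s) := infEdist_anti htd
          _ ≤ infEdist x sᶜ := by
              refine le_infEDist.2 ?_
              exact fun y hy => infEdist_frontier_le hx hy
      obtain ⟨z, hzr, hzb⟩ := infEdist_lt_iff.mp (lt_of_le_of_lt h1 hab)
      obtain ⟨n, rfl⟩ := hzr
      exact ⟨n, Or.inr ((ENNReal.rpow_le_rpow hzb.le hp0.le).trans hbp)⟩
    · exact ⟨0, Or.inl hx⟩
  have hPm : ∀ n, MeasurableSet {x | P x n} := by
    intro n
    have h1 : Measurable fun x : E => edist x (f n) ^ p :=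
      (ENNReal.continuous_rpow_const.comp (continuous_id.edist continuous_const)).measurable
    have h2 : Measurable fun x : E => infEdist x sᶜ ^ p + η :=
      ((ENNReal.continuous_rpow_const.comp continuous_infEdist).measurable).add_const _
    have heq : {x | P x n} = {x | x ∈ s}ᶜ ∪ {x | edist x (f n) ^ p ≤ infEdist x sᶜ ^ p + η} := by
      ext x; simp [hP]
    rw [heq]
    exact hsm.compl.union (measurableSet_le h1 h2)
  refine ⟨fun x => f (Nat.find (hex x)), (measurable_from_top).comp (measurable_find hex hPm),
    fun x hx _ => ?_⟩
  have hspec := Nat.find_spec (hex x)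
  rcases hspec with h | h
  · exact absurd hx h
  · exact ⟨hts (hf ▸ Set.mem_range_self _), h⟩

lemma tsum_T_le {p : ℝ} (hp : 1 ≤ p)
    (Ωs : ℕ → Set E) (hopen : ∀ k, IsOpen (Ωs k))
    (hdisj : Pairwise (Function.onFun Disjoint Ωs)) (z : E × E) :
    (∑' k, ((Ωs k ×ˢ Ωs k).indicator (fun w => edist w.1 w.2 ^ p) z
      + ((Ωs k ×ˢ (Ωs k)ᶜ).indicator (fun w => infEdist w.1 (Ωs k)ᶜ ^ p) z
      + (((Ωs k)ᶜ ×ˢ Ωs k).indicator (fun w => infEdist w.2 (Ωs k)ᶜ ^ p) z))))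
    ≤ edist z.1 z.2 ^ p := by
  obtain ⟨x, y⟩ := z
  have hp0 : (0:ℝ) ≤ p := le_trans zero_le_one hp
  set f : ℕ → ℝ≥0∞ := fun k =>
    (Ωs k ×ˢ Ωs k).indicator (fun w => edist w.1 w.2 ^ p) (x, y)
      + ((Ωs k ×ˢ (Ωs k)ᶜ).indicator (fun w => infEdist w.1 (Ωs k)ᶜ ^ p) (x, y)
      + (((Ωs k)ᶜ ×ˢ Ωs k).indicator (fun w => infEdist w.2 (Ωs k)ᶜ ^ p) (x, y))) with hfdef
  show (∑' k, f k) ≤ edist x y ^ p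
  have hvan : ∀ k, x ∉ Ωs k → y ∉ Ωs k → f k = 0 := by
    intro k hx hy
    simp only [hfdef]
    rw [Set.indicator_of_notMem (fun h => hx h.1), Set.indicator_of_notMem (fun h => hx h.1),
        Set.indicator_of_notMem (fun h => hy h.2), add_zero, add_zero]
  by_cases hx : ∃ k, x ∈ Ωs k
  · obtain ⟨k, hk⟩ := hx
    have hxo : ∀ b, b ≠ k → x ∉ Ωs b := fun b hb hxb =>
      Set.disjoint_left.mp (hdisj hb) hxb hk
    by_cases hy : ∃ j, y ∈ Ωs j
    · obtain ⟨j, hj⟩ := hy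
      have hyo : ∀ b, b ≠ j → y ∉ Ωs b := fun b hb hyb =>
        Set.disjoint_left.mp (hdisj hb) hyb hj
      by_cases hkj : k = j
      · subst hkj
        rw [tsum_eq_single k (fun b hb => hvan b (hxo b hb) (hyo b hb))]
        simp only [hfdef]
        rw [Set.indicator_of_mem (Set.mk_mem_prod hk hj),
            Set.indicator_of_notMem (fun h => h.2 hj),
            Set.indicator_of_notMem (fun h => h.1 hk), add_zero, add_zero]
      · have hxj : x ∉ Ωs j := hxo j (Ne.symm hkj)
        have hyk : y ∉ Ωs k := hyo k hkj
        have hsum : ∑' b, f b = f k + f j := by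
          rw [tsum_eq_sum (s := {k, j}) (fun b hb => ?_)]
          · rw [Finset.sum_pair hkj]
          · simp only [Finset.mem_insert, Finset.mem_singleton, not_or] at hb
            exact hvan b (hxo b hb.1) (hyo b hb.2)
        rw [hsum]
        have hfk : f k = infEdist x (Ωs k)ᶜ ^ p := by
          simp only [hfdef]
          rw [Set.indicator_of_notMem (fun h => hyk h.2),
              Set.indicator_of_mem (Set.mk_mem_prod hk (Set.mem_compl hyk)),
              Set.indicator_of_notMem (fun h => h.1 hk), zero_add, add_zero]
        have hfj : f j = infEdist y (Ωs j)ᶜ ^ p := by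
          simp only [hfdef]
          rw [Set.indicator_of_notMem (fun h => hxj h.1),
              Set.indicator_of_notMem (fun h => hxj h.1),
              Set.indicator_of_mem (Set.mk_mem_prod (Set.mem_compl hxj) hj), zero_add, zero_add]
        rw [hfk, hfj]
        calc infEdist x (Ωs k)ᶜ ^ p + infEdist y (Ωs j)ᶜ ^ p
            ≤ (infEdist x (Ωs k)ᶜ + infEdist y (Ωs j)ᶜ) ^ p :=
              ENNReal.add_rpow_le_rpow_add _ _ hp
          _ ≤ edist x y ^ p := ENNReal.rpow_le_rpow
              (cross_infEdist_le (hopen k) (hopen j) (hdisj hkj) hk hj) hp0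
    · push_neg at hy
      rw [tsum_eq_single k (fun b hb => hvan b (hxo b hb) (hy b))]
      have hfk : f k = infEdist x (Ωs k)ᶜ ^ p := by
        simp only [hfdef]
        rw [Set.indicator_of_notMem (fun h => (hy k) h.2),
            Set.indicator_of_mem (Set.mk_mem_prod hk (Set.mem_compl (hy k))),
            Set.indicator_of_notMem (fun h => h.1 hk), zero_add, add_zero]
      rw [hfk]
      exact ENNReal.rpow_le_rpow (infEdist_le_edist_of_mem (hy k)) hp0
  · push_neg at hx
    by_cases hy : ∃ j, y ∈ Ωs j
    · obtain ⟨j, hj⟩ := hy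
      have hyo : ∀ b, b ≠ j → y ∉ Ωs b := fun b hb hyb =>
        Set.disjoint_left.mp (hdisj hb) hyb hj
      rw [tsum_eq_single j (fun b hb => hvan b (hx b) (hyo b hb))]
      have hfj : f j = infEdist y (Ωs j)ᶜ ^ p := by
        simp only [hfdef]
        rw [Set.indicator_of_notMem (fun h => (hx j) h.1),
            Set.indicator_of_notMem (fun h => (hx j) h.1),
            Set.indicator_of_mem (Set.mk_mem_prod (Set.mem_compl (hx j)) hj), zero_add, zero_add]
      rw [hfj]
      refine ENNReal.rpow_le_rpow ?_ hp0
      rw [edist_comm]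
      exact infEdist_le_edist_of_mem (hx j)
    · push_neg at hy
      have hz : ∀ b, f b = 0 := fun b => hvan b (hx b) (hy b)
      rw [tsum_congr hz, tsum_zero]
      exact zero_le

end AuxLemmas

/-- Superadditivity of the boundary Wasserstein cost over a countable disjoint family of
open subsets of a bounded open set `Ω`. -/
theorem boundaryCost_superadditive
    {d : ℕ} (p : ℝ) (hp : 1 ≤ p)
    (Ω : Set (EuclideanSpace ℝ (Fin d))) (hΩopen : IsOpen Ω)
    (hΩbdd : Bornology.IsBounded Ω)
    (Ωs : ℕ → Set (EuclideanSpace ℝ (Fin d)))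
    (hopen : ∀ k, IsOpen (Ωs k)) (hsub : ∀ k, Ωs k ⊆ Ω)
    (hdisj : Pairwise (Function.onFun Disjoint Ωs))
    (μ ν : Measure (EuclideanSpace ℝ (Fin d)))
    (hμ : IsFiniteMeasure μ) (hν : IsFiniteMeasure ν) :
    ∑' k, bCost p (Ωs k) μ ν ≤ bCost p Ω μ ν := by
    classical
  haveI := hμ
  haveI := hν
  have hp0 : (0:ℝ) < p := lt_of_lt_of_le one_pos hp
  have hc : Measurable fun z : EuclideanSpace ℝ (Fin d) × EuclideanSpace ℝ (Fin d) =>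
      edist z.1 z.2 ^ p :=
    (ENNReal.continuous_rpow_const.comp continuous_edist).measurable
  refine le_iInf₂ fun π hπ => ?_
  obtain ⟨hπ0, hπfst, hπsnd⟩ := hπ
  refine ENNReal.le_of_forall_pos_le_add fun ε hε hfin => ?_
  set M0 : ℝ≥0∞ := μ Set.univ + ν Set.univ with hM0def
  have hM0top : M0 ≠ ∞ :=
    ENNReal.add_ne_top.mpr ⟨measure_ne_top μ _, measure_ne_top ν _⟩
  set c0 : ℝ≥0∞ := (ε : ℝ≥0∞) / (2 * (M0 + 1)) with hc0def
  have hc00 : c0 ≠ 0 := by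
    rw [hc0def]
    exact (ENNReal.div_pos (ENNReal.coe_ne_zero.mpr hε.ne')
      (ENNReal.mul_ne_top ENNReal.ofNat_ne_top
        (ENNReal.add_ne_top.mpr ⟨hM0top, ENNReal.one_ne_top⟩))).ne'
  set η : ℕ → ℝ≥0∞ := fun k => c0 * 2⁻¹ ^ k with hηdef
  have hηne : ∀ k, η k ≠ 0 := fun k =>
    mul_ne_zero hc00 (pow_ne_zero k (ENNReal.inv_ne_zero.mpr ENNReal.ofNat_ne_top))
  choose g hgm hgp using fun k : ℕ => exists_gfun (hopen k).measurableSet hp (hηne k)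
  have hsm : ∀ k, MeasurableSet (Ωs k) := fun k => (hopen k).measurableSet
  have hφm : ∀ k, Measurable fun z : EuclideanSpace ℝ (Fin d) × EuclideanSpace ℝ (Fin d) =>
      (z.1, g k z.1) := fun k => measurable_fst.prodMk ((hgm k).comp measurable_fst)
  have hψm : ∀ k, Measurable fun z : EuclideanSpace ℝ (Fin d) × EuclideanSpace ℝ (Fin d) =>
      (g k z.2, z.2) := fun k => ((hgm k).comp measurable_snd).prodMk measurable_snd
  have hgfr : ∀ k, ∀ x, x ∈ Ωs k → (Ωs k)ᶜ.Nonempty → g k x ∈ frontier (Ωs k) :=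
    fun k x hx hn => (hgp k x hx hn).1
  have hmargX : ∀ k, π (Ωs k ×ˢ (Ωs k)ᶜ) ≤ μ Set.univ := by
    intro k
    have h1 : π (Ωs k ×ˢ (Ωs k)ᶜ) ≤ π (Prod.fst ⁻¹' Ωs k) := measure_mono fun z hz => hz.1
    have h2 : π (Prod.fst ⁻¹' Ωs k) = μ (Ωs k) := by
      rw [← Measure.map_apply measurable_fst (hsm k)]
      have h3 := congrArg (fun m : Measure (EuclideanSpace ℝ (Fin d)) => m (Ωs k)) hπfst
      simp only [Measure.restrict_apply (hsm k)] at h3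
      rwa [Set.inter_eq_self_of_subset_left (hsub k)] at h3
    rw [h2] at h1
    exact h1.trans (measure_mono (Set.subset_univ _))
  have hmargY : ∀ k, π ((Ωs k)ᶜ ×ˢ Ωs k) ≤ ν Set.univ := by
    intro k
    have h1 : π ((Ωs k)ᶜ ×ˢ Ωs k) ≤ π (Prod.snd ⁻¹' Ωs k) := measure_mono fun z hz => hz.2
    have h2 : π (Prod.snd ⁻¹' Ωs k) = ν (Ωs k) := by
      rw [← Measure.map_apply measurable_snd (hsm k)]
      have h3 := congrArg (fun m : Measure (EuclideanSpace ℝ (Fin d)) => m (Ωs k)) hπsnd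
      simp only [Measure.restrict_apply (hsm k)] at h3
      rwa [Set.inter_eq_self_of_subset_left (hsub k)] at h3
    rw [h2] at h1
    exact h1.trans (measure_mono (Set.subset_univ _))
  have hble : ∀ k, bCost p (Ωs k) μ ν ≤
      (∫⁻ z in Ωs k ×ˢ Ωs k, edist z.1 z.2 ^ p ∂π)
      + ((∫⁻ z in Ωs k ×ˢ (Ωs k)ᶜ, EMetric.infEdist z.1 (Ωs k)ᶜ ^ p ∂π)
        + (∫⁻ z in (Ωs k)ᶜ ×ˢ Ωs k, EMetric.infEdist z.2 (Ωs k)ᶜ ^ p ∂π))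
      + η k * M0 := by
    intro k
    set πk : Measure (EuclideanSpace ℝ (Fin d) × EuclideanSpace ℝ (Fin d)) :=
      π.restrict (Ωs k ×ˢ Ωs k)
      + (π.restrict (Ωs k ×ˢ (Ωs k)ᶜ)).map (fun z => (z.1, g k z.1))
      + (π.restrict ((Ωs k)ᶜ ×ˢ Ωs k)).map (fun z => (g k z.2, z.2)) with hπk
    have hTcm : MeasurableSet ((closure (Ωs k) ×ˢ closure (Ωs k))ᶜ) :=
      (isClosed_closure.measurableSet.prod isClosed_closure.measurableSet).compl
    have hgsnd : Measurable fun z : EuclideanSpace ℝ (Fin d) × EuclideanSpace ℝ (Fin d) =>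
        g k z.2 := (hgm k).comp measurable_snd
    have hgfst : Measurable fun z : EuclideanSpace ℝ (Fin d) × EuclideanSpace ℝ (Fin d) =>
        g k z.1 := (hgm k).comp measurable_fst
    have hconc : πk ((closure (Ωs k) ×ˢ closure (Ωs k))ᶜ) = 0 := by
      rw [hπk, Measure.add_apply, Measure.add_apply]
      have h1 : π.restrict (Ωs k ×ˢ Ωs k) ((closure (Ωs k) ×ˢ closure (Ωs k))ᶜ) = 0 := by
        rw [Measure.restrict_apply hTcm]
        have he : (closure (Ωs k) ×ˢ closure (Ωs k))ᶜ ∩ Ωs k ×ˢ Ωs k = ∅ := by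
          apply Set.eq_empty_iff_forall_notMem.mpr
          rintro z ⟨hzc, hz⟩
          rw [Set.mem_prod] at hz
          exact hzc ⟨subset_closure hz.1, subset_closure hz.2⟩
        rw [he, measure_empty]
      have h2 : (π.restrict (Ωs k ×ˢ (Ωs k)ᶜ)).map (fun z => (z.1, g k z.1))
          ((closure (Ωs k) ×ˢ closure (Ωs k))ᶜ) = 0 := by
        rw [Measure.map_apply (hφm k) hTcm, Measure.restrict_apply ((hφm k) hTcm)]
        have he : (fun z : EuclideanSpace ℝ (Fin d) × EuclideanSpace ℝ (Fin d) =>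
            (z.1, g k z.1)) ⁻¹' (closure (Ωs k) ×ˢ closure (Ωs k))ᶜ ∩ Ωs k ×ˢ (Ωs k)ᶜ = ∅ := by
          apply Set.eq_empty_iff_forall_notMem.mpr
          rintro z ⟨hzc, hz⟩
          rw [Set.mem_prod] at hz
          exact hzc ⟨subset_closure hz.1,
            frontier_subset_closure (hgfr k z.1 hz.1 ⟨z.2, hz.2⟩)⟩
        rw [he, measure_empty]
      have h3 : (π.restrict ((Ωs k)ᶜ ×ˢ Ωs k)).map (fun z => (g k z.2, z.2))
          ((closure (Ωs k) ×ˢ closure (Ωs k))ᶜ) = 0 := by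
        rw [Measure.map_apply (hψm k) hTcm, Measure.restrict_apply ((hψm k) hTcm)]
        have he : (fun z : EuclideanSpace ℝ (Fin d) × EuclideanSpace ℝ (Fin d) =>
            (g k z.2, z.2)) ⁻¹' (closure (Ωs k) ×ˢ closure (Ωs k))ᶜ ∩ (Ωs k)ᶜ ×ˢ Ωs k = ∅ := by
          apply Set.eq_empty_iff_forall_notMem.mpr
          rintro z ⟨hzc, hz⟩
          rw [Set.mem_prod] at hz
          exact hzc ⟨frontier_subset_closure (hgfr k z.2 hz.2 ⟨z.1, hz.1⟩),
            subset_closure hz.2⟩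
        rw [he, measure_empty]
      rw [h1, h2, h3, add_zero, add_zero]
    have hfst : (πk.map Prod.fst).restrict (Ωs k) = μ.restrict (Ωs k) := by
      have e1 : πk.map Prod.fst =
          (π.restrict (Ωs k ×ˢ Ωs k)).map Prod.fst
          + (π.restrict (Ωs k ×ˢ (Ωs k)ᶜ)).map Prod.fst
          + (π.restrict ((Ωs k)ᶜ ×ˢ Ωs k)).map (fun z => g k z.2) := by
        rw [hπk, Measure.map_add _ _ measurable_fst, Measure.map_add _ _ measurable_fst,
            Measure.map_map measurable_fst (hφm k), Measure.map_map measurable_fst (hψm k)]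
        rfl
      rw [e1, Measure.restrict_add, Measure.restrict_add]
      have e2 : ((π.restrict ((Ωs k)ᶜ ×ˢ Ωs k)).map (fun z => g k z.2)).restrict (Ωs k) = 0 := by
        rw [Measure.restrict_eq_zero, Measure.map_apply hgsnd (hsm k),
            Measure.restrict_apply (hgsnd (hsm k))]
        have he : (fun z : EuclideanSpace ℝ (Fin d) × EuclideanSpace ℝ (Fin d) =>
            g k z.2) ⁻¹' Ωs k ∩ (Ωs k)ᶜ ×ˢ Ωs k = ∅ := by
          apply Set.eq_empty_iff_forall_notMem.mpr
          rintro z ⟨hz1, hz2⟩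
          rw [Set.mem_prod] at hz2
          have hg := hgfr k z.2 hz2.2 ⟨z.1, hz2.1⟩
          rw [(hopen k).frontier_eq] at hg
          exact hg.2 hz1
        rw [he, measure_empty]
      rw [e2, add_zero, ← Measure.restrict_add, ← Measure.map_add _ _ measurable_fst]
      have e3 : π.restrict (Ωs k ×ˢ Ωs k) + π.restrict (Ωs k ×ˢ (Ωs k)ᶜ)
          = π.restrict (Prod.fst ⁻¹' Ωs k) := by
        rw [← Measure.restrict_union (Set.disjoint_left.mpr fun z hz hz' => hz'.2 hz.2)
            ((hsm k).prod (hsm k).compl), ← Set.prod_union, Set.union_compl_self,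
            Set.prod_univ]
      rw [e3, ← Measure.restrict_map measurable_fst (hsm k), Measure.restrict_restrict (hsm k),
          Set.inter_self]
      have e4 : (π.map Prod.fst).restrict (Ωs k)
          = ((π.map Prod.fst).restrict Ω).restrict (Ωs k) := by
        rw [Measure.restrict_restrict (hsm k), Set.inter_eq_self_of_subset_left (hsub k)]
      rw [e4, hπfst, Measure.restrict_restrict (hsm k),
          Set.inter_eq_self_of_subset_left (hsub k)]
    have hsnd : (πk.map Prod.snd).restrict (Ωs k) = ν.restrict (Ωs k) := by
      have e1 : πk.map Prod.snd =
          (π.restrict (Ωs k ×ˢ Ωs k)).map Prod.snd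
          + (π.restrict (Ωs k ×ˢ (Ωs k)ᶜ)).map (fun z => g k z.1)
          + (π.restrict ((Ωs k)ᶜ ×ˢ Ωs k)).map Prod.snd := by
        rw [hπk, Measure.map_add _ _ measurable_snd, Measure.map_add _ _ measurable_snd,
            Measure.map_map measurable_snd (hφm k), Measure.map_map measurable_snd (hψm k)]
        rfl
      rw [e1, Measure.restrict_add, Measure.restrict_add]
      have e2 : ((π.restrict (Ωs k ×ˢ (Ωs k)ᶜ)).map (fun z => g k z.1)).restrict (Ωs k) = 0 := by
        rw [Measure.restrict_eq_zero, Measure.map_apply hgfst (hsm k),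
            Measure.restrict_apply (hgfst (hsm k))]
        have he : (fun z : EuclideanSpace ℝ (Fin d) × EuclideanSpace ℝ (Fin d) =>
            g k z.1) ⁻¹' Ωs k ∩ Ωs k ×ˢ (Ωs k)ᶜ = ∅ := by
          apply Set.eq_empty_iff_forall_notMem.mpr
          rintro z ⟨hz1, hz2⟩
          rw [Set.mem_prod] at hz2
          have hg := hgfr k z.1 hz2.1 ⟨z.2, hz2.2⟩
          rw [(hopen k).frontier_eq] at hg
          exact hg.2 hz1
        rw [he, measure_empty]
      rw [e2, add_zero, ← Measure.restrict_add, ← Measure.map_add _ _ measurable_snd]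
      have e3 : π.restrict (Ωs k ×ˢ Ωs k) + π.restrict ((Ωs k)ᶜ ×ˢ Ωs k)
          = π.restrict (Prod.snd ⁻¹' Ωs k) := by
        rw [← Measure.restrict_union (Set.disjoint_left.mpr fun z hz hz' => hz'.1 hz.1)
            ((hsm k).compl.prod (hsm k)), ← Set.union_prod, Set.union_compl_self,
            Set.univ_prod]
      rw [e3, ← Measure.restrict_map measurable_snd (hsm k), Measure.restrict_restrict (hsm k),
          Set.inter_self]
      have e4 : (π.map Prod.snd).restrict (Ωs k)
          = ((π.map Prod.snd).restrict Ω).restrict (Ωs k) := by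
        rw [Measure.restrict_restrict (hsm k), Set.inter_eq_self_of_subset_left (hsub k)]
      rw [e4, hπsnd, Measure.restrict_restrict (hsm k),
          Set.inter_eq_self_of_subset_left (hsub k)]
    have hcost : (∫⁻ z, edist z.1 z.2 ^ p ∂πk) ≤
        (∫⁻ z in Ωs k ×ˢ Ωs k, edist z.1 z.2 ^ p ∂π)
        + ((∫⁻ z in Ωs k ×ˢ (Ωs k)ᶜ, EMetric.infEdist z.1 (Ωs k)ᶜ ^ p ∂π)
          + (∫⁻ z in (Ωs k)ᶜ ×ˢ Ωs k, EMetric.infEdist z.2 (Ωs k)ᶜ ^ p ∂π))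
        + η k * M0 := by
      rw [hπk, lintegral_add_measure, lintegral_add_measure,
          lintegral_map hc (hφm k), lintegral_map hc (hψm k)]
      have hX : (∫⁻ z in Ωs k ×ˢ (Ωs k)ᶜ, edist z.1 (g k z.1) ^ p ∂π)
          ≤ (∫⁻ z in Ωs k ×ˢ (Ωs k)ᶜ, EMetric.infEdist z.1 (Ωs k)ᶜ ^ p ∂π)
            + η k * μ Set.univ := by
        have hmono : (∫⁻ z in Ωs k ×ˢ (Ωs k)ᶜ, edist z.1 (g k z.1) ^ p ∂π)
            ≤ ∫⁻ z in Ωs k ×ˢ (Ωs k)ᶜ, (EMetric.infEdist z.1 (Ωs k)ᶜ ^ p + η k) ∂π := by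
          refine setLIntegral_mono
            (((ENNReal.continuous_rpow_const.comp
              (EMetric.continuous_infEdist.comp continuous_fst)).measurable).add_const _)
            fun z hz => ?_
          rw [Set.mem_prod] at hz
          exact (hgp k z.1 hz.1 ⟨z.2, hz.2⟩).2
        refine hmono.trans ?_
        rw [lintegral_add_right _ measurable_const, setLIntegral_const]
        exact add_le_add_right (mul_le_mul_right (hmargX k) _) _
      have hY : (∫⁻ z in (Ωs k)ᶜ ×ˢ Ωs k, edist (g k z.2) z.2 ^ p ∂π)
          ≤ (∫⁻ z in (Ωs k)ᶜ ×ˢ Ωs k, EMetric.infEdist z.2 (Ωs k)ᶜ ^ p ∂π)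
            + η k * ν Set.univ := by
        have hmono : (∫⁻ z in (Ωs k)ᶜ ×ˢ Ωs k, edist (g k z.2) z.2 ^ p ∂π)
            ≤ ∫⁻ z in (Ωs k)ᶜ ×ˢ Ωs k, (EMetric.infEdist z.2 (Ωs k)ᶜ ^ p + η k) ∂π := by
          refine setLIntegral_mono
            (((ENNReal.continuous_rpow_const.comp
              (EMetric.continuous_infEdist.comp continuous_snd)).measurable).add_const _)
            fun z hz => ?_
          rw [Set.mem_prod] at hz
          rw [edist_comm]
          exact (hgp k z.2 hz.2 ⟨z.1, hz.1⟩).2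
        refine hmono.trans ?_
        rw [lintegral_add_right _ measurable_const, setLIntegral_const]
        exact add_le_add_right (mul_le_mul_right (hmargY k) _) _
      calc (∫⁻ z in Ωs k ×ˢ Ωs k, edist z.1 z.2 ^ p ∂π)
            + (∫⁻ z in Ωs k ×ˢ (Ωs k)ᶜ, edist z.1 (g k z.1) ^ p ∂π)
            + (∫⁻ z in (Ωs k)ᶜ ×ˢ Ωs k, edist (g k z.2) z.2 ^ p ∂π)
          ≤ (∫⁻ z in Ωs k ×ˢ Ωs k, edist z.1 z.2 ^ p ∂π)
            + ((∫⁻ z in Ωs k ×ˢ (Ωs k)ᶜ, EMetric.infEdist z.1 (Ωs k)ᶜ ^ p ∂π)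
              + η k * μ Set.univ)
            + ((∫⁻ z in (Ωs k)ᶜ ×ˢ Ωs k, EMetric.infEdist z.2 (Ωs k)ᶜ ^ p ∂π)
              + η k * ν Set.univ) := add_le_add (add_le_add le_rfl hX) hY
        _ = (∫⁻ z in Ωs k ×ˢ Ωs k, edist z.1 z.2 ^ p ∂π)
            + ((∫⁻ z in Ωs k ×ˢ (Ωs k)ᶜ, EMetric.infEdist z.1 (Ωs k)ᶜ ^ p ∂π)
              + (∫⁻ z in (Ωs k)ᶜ ×ˢ Ωs k, EMetric.infEdist z.2 (Ωs k)ᶜ ^ p ∂π))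
            + η k * M0 := by rw [hM0def]; ring
    refine le_trans ?_ hcost
    exact iInf₂_le πk ⟨hconc, hfst, hsnd⟩
  -- summation
  have hηsum : (∑' k, η k * M0) ≤ (ε : ℝ≥0∞) := by
    have h1 : (∑' k, η k * M0) = c0 * M0 * 2 := by
      calc (∑' k, η k * M0) = ∑' k, (c0 * M0) * (2⁻¹:ℝ≥0∞) ^ k :=
            tsum_congr fun k => by simp only [hηdef]; ring
        _ = (c0 * M0) * ∑' k, (2⁻¹:ℝ≥0∞) ^ k := ENNReal.tsum_mul_left
        _ = c0 * M0 * 2 := by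
            rw [ENNReal.tsum_geometric, ENNReal.one_sub_inv_two, inv_inv]
    rw [h1]
    calc c0 * M0 * 2 = c0 * (M0 * 2) := mul_assoc _ _ _
      _ ≤ c0 * (2 * (M0 + 1)) := by
          refine mul_le_mul_right ?_ _
          rw [mul_comm]
          exact mul_le_mul_right le_self_add 2
      _ = ε := by
          rw [hc0def]
          exact ENNReal.div_mul_cancel
            (mul_ne_zero (by norm_num) (by simp))
            (ENNReal.mul_ne_top ENNReal.ofNat_ne_top
              (ENNReal.add_ne_top.mpr ⟨hM0top, ENNReal.one_ne_top⟩))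
  have hmain : (∑' k, ((∫⁻ z in Ωs k ×ˢ Ωs k, edist z.1 z.2 ^ p ∂π)
      + ((∫⁻ z in Ωs k ×ˢ (Ωs k)ᶜ, EMetric.infEdist z.1 (Ωs k)ᶜ ^ p ∂π)
        + (∫⁻ z in (Ωs k)ᶜ ×ˢ Ωs k, EMetric.infEdist z.2 (Ωs k)ᶜ ^ p ∂π))))
      ≤ ∫⁻ z, edist z.1 z.2 ^ p ∂π := by
    have hm1 : ∀ k : ℕ, Measurable fun z : EuclideanSpace ℝ (Fin d) × EuclideanSpace ℝ (Fin d)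
        => EMetric.infEdist z.1 (Ωs k)ᶜ ^ p :=
      fun k => (ENNReal.continuous_rpow_const.comp
        (EMetric.continuous_infEdist.comp continuous_fst)).measurable
    have hm2 : ∀ k : ℕ, Measurable fun z : EuclideanSpace ℝ (Fin d) × EuclideanSpace ℝ (Fin d)
        => EMetric.infEdist z.2 (Ωs k)ᶜ ^ p :=
      fun k => (ENNReal.continuous_rpow_const.comp
        (EMetric.continuous_infEdist.comp continuous_snd)).measurable
    have hTkm : ∀ k : ℕ, Measurable fun z : EuclideanSpace ℝ (Fin d) × EuclideanSpace ℝ (Fin d)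
        => (Ωs k ×ˢ Ωs k).indicator (fun w => edist w.1 w.2 ^ p) z
          + ((Ωs k ×ˢ (Ωs k)ᶜ).indicator (fun w => EMetric.infEdist w.1 (Ωs k)ᶜ ^ p) z
          + (((Ωs k)ᶜ ×ˢ Ωs k).indicator (fun w => EMetric.infEdist w.2 (Ωs k)ᶜ ^ p) z)) :=
      fun k => (hc.indicator ((hsm k).prod (hsm k))).add
        (((hm1 k).indicator ((hsm k).prod (hsm k).compl)).add
         ((hm2 k).indicator ((hsm k).compl.prod (hsm k))))
    calc (∑' k, ((∫⁻ z in Ωs k ×ˢ Ωs k, edist z.1 z.2 ^ p ∂π)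
        + ((∫⁻ z in Ωs k ×ˢ (Ωs k)ᶜ, EMetric.infEdist z.1 (Ωs k)ᶜ ^ p ∂π)
          + (∫⁻ z in (Ωs k)ᶜ ×ˢ Ωs k, EMetric.infEdist z.2 (Ωs k)ᶜ ^ p ∂π))))
        = ∑' k, ∫⁻ z, ((Ωs k ×ˢ Ωs k).indicator (fun w => edist w.1 w.2 ^ p) z
          + ((Ωs k ×ˢ (Ωs k)ᶜ).indicator (fun w => EMetric.infEdist w.1 (Ωs k)ᶜ ^ p) z
          + (((Ωs k)ᶜ ×ˢ Ωs k).indicator (fun w => EMetric.infEdist w.2 (Ωs k)ᶜ ^ p) z))) ∂π := by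
          refine tsum_congr fun k => ?_
          rw [lintegral_add_left (hc.indicator ((hsm k).prod (hsm k))),
              lintegral_add_left ((hm1 k).indicator ((hsm k).prod (hsm k).compl)),
              lintegral_indicator ((hsm k).prod (hsm k)),
              lintegral_indicator ((hsm k).prod (hsm k).compl),
              lintegral_indicator ((hsm k).compl.prod (hsm k))]
      _ = ∫⁻ z, ∑' k, ((Ωs k ×ˢ Ωs k).indicator (fun w => edist w.1 w.2 ^ p) z
          + ((Ωs k ×ˢ (Ωs k)ᶜ).indicator (fun w => EMetric.infEdist w.1 (Ωs k)ᶜ ^ p) z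
          + (((Ωs k)ᶜ ×ˢ Ωs k).indicator (fun w => EMetric.infEdist w.2 (Ωs k)ᶜ ^ p) z))) ∂π :=
          (lintegral_tsum fun k => (hTkm k).aemeasurable).symm
      _ ≤ ∫⁻ z, edist z.1 z.2 ^ p ∂π :=
          lintegral_mono fun z => tsum_T_le hp Ωs hopen hdisj z
  calc (∑' k, bCost p (Ωs k) μ ν)
      ≤ ∑' k, ((∫⁻ z in Ωs k ×ˢ Ωs k, edist z.1 z.2 ^ p ∂π)
        + ((∫⁻ z in Ωs k ×ˢ (Ωs k)ᶜ, EMetric.infEdist z.1 (Ωs k)ᶜ ^ p ∂π)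
          + (∫⁻ z in (Ωs k)ᶜ ×ˢ Ωs k, EMetric.infEdist z.2 (Ωs k)ᶜ ^ p ∂π))
        + η k * M0) := ENNReal.tsum_le_tsum hble
    _ = (∑' k, ((∫⁻ z in Ωs k ×ˢ Ωs k, edist z.1 z.2 ^ p ∂π)
        + ((∫⁻ z in Ωs k ×ˢ (Ωs k)ᶜ, EMetric.infEdist z.1 (Ωs k)ᶜ ^ p ∂π)
          + (∫⁻ z in (Ωs k)ᶜ ×ˢ Ωs k, EMetric.infEdist z.2 (Ωs k)ᶜ ^ p ∂π))))
        + ∑' k, η k * M0 := ENNReal.tsum_add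
    _ ≤ (∫⁻ z, edist z.1 z.2 ^ p ∂π) + ε := add_le_add hmain hηsum
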